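/- arXiv:1007.2747 — 3 statements merged into one kernel-verified Lean document; each statement's English description precedes it below -/
import Mathlib

section
/- If t_0 is a common root of p and q, then the vector (β_0^{(n-1)}(t_0), β_1^{(n-1)}(t_0), …, β_{n-1}^{(n-1)}(t_0)) lies in the nullspace of the Bernstein-Bézout matrix of p and q, i.e., B applied to this vector gives the zero vector. -/
/-- Bernstein basis polynomial `β_i^{(m)}(t) = C(m,i) (1-t)^(m-i) t^i`, as a real function. -/
noncomputable def bern (m i : ℕ) (t : ℝ) : ℝ := (m.choose i : ℝ) * (1 - t) ^ (m - i) * t ^ i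

/-- If `t₀` is a common root of `p` and `q`, then the vector
`(β_0^{(n-1)}(t₀), …, β_{n-1}^{(n-1)}(t₀))` is in the nullspace of the Bernstein–Bézout matrix. -/
theorem bernstein_vector_mem_nullspace (n : ℕ) (hn : 1 ≤ n) (p q : Polynomial ℝ)
    (hp : p.natDegree ≤ n) (hq : q.natDegree ≤ n)
    (B : Matrix (Fin n) (Fin n) ℝ)
    (hB : ∀ t s : ℝ, p.eval t * q.eval s - p.eval s * q.eval t
      = (t - s) * ∑ i : Fin n, ∑ j : Fin n, B i j * bern (n - 1) i t * bern (n - 1) j s)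
    (t₀ : ℝ) (hpt : p.eval t₀ = 0) (hqt : q.eval t₀ = 0) :
    B.mulVec (fun j : Fin n => bern (n - 1) j t₀) = 0 := by
  obtain ⟨m, rfl⟩ : ∃ m, n = m + 1 := ⟨n - 1, by omega⟩
  have hm : m + 1 - 1 = m := rfl
  rw [hm] at hB ⊢
  set c : Fin (m + 1) → ℝ := fun i => ∑ j, B i j * bern m j t₀ with hc
  have hF : ∀ t : ℝ, t ≠ t₀ → ∑ i, c i * bern m i t = 0 := by
    intro t ht
    have h := hB t t₀
    rw [hpt, hqt] at h
    simp only [mul_zero, zero_mul, sub_zero, zero_sub, neg_eq_zero] at h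
    have h2 : (t - t₀) * ∑ i, ∑ j, B i j * bern m i t * bern m j t₀ = 0 := by linarith
    have h3 := (mul_eq_zero.mp h2).resolve_left (sub_ne_zero.mpr ht)
    rw [← h3]
    refine Finset.sum_congr rfl fun i _ => ?_
    rw [hc, Finset.sum_mul]
    exact Finset.sum_congr rfl fun j _ => by ring
  set Q : Polynomial ℝ := ∑ i : Fin (m + 1),
    Polynomial.C (c i * (m.choose i : ℝ)) * Polynomial.X ^ (i : ℕ) with hQ
  have hQeval : ∀ x : ℝ, 0 < x → x / (1 + x) ≠ t₀ → Q.eval x = 0 := by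
    intro x hx hxt
    have h1x : (1 : ℝ) + x ≠ 0 := by positivity
    have h1x' : (0 : ℝ) < 1 + x := by positivity
    set t := x / (1 + x) with htdef
    have h1t : 1 - t = 1 / (1 + x) := by rw [htdef]; field_simp; ring
    have hbern : ∀ i : Fin (m + 1),
        bern m i t = (m.choose i : ℝ) * x ^ (i : ℕ) / (1 + x) ^ m := by
      intro i
      have hi : (i : ℕ) ≤ m := Nat.lt_succ_iff.mp i.isLt
      have hsplit : (1 + x) ^ m = (1 + x) ^ (m - (i : ℕ)) * (1 + x) ^ (i : ℕ) := by
        rw [← pow_add, Nat.sub_add_cancel hi]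
      simp only [bern]
      rw [h1t, htdef, div_pow, div_pow, one_pow, hsplit]
      field_simp
    have hcalc : Q.eval x = (1 + x) ^ m * ∑ i, c i * bern m i t := by
      rw [hQ, Polynomial.eval_finset_sum, Finset.mul_sum]
      refine Finset.sum_congr rfl fun i _ => ?_
      rw [hbern i]
      simp only [Polynomial.eval_mul, Polynomial.eval_C, Polynomial.eval_pow, Polynomial.eval_X]
      have hpm : (1 + x) ^ m ≠ 0 := pow_ne_zero _ h1x
      field_simp
    rw [hcalc, hF t hxt, mul_zero]
  have hQ0 : Q = 0 := by
    apply Polynomial.eq_zero_of_infinite_isRoot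
    apply Set.Infinite.mono (s := Set.Ioi (0:ℝ) \ {x : ℝ | 0 < x ∧ x / (1 + x) = t₀})
    · rintro x ⟨hx1, hx2⟩
      have hx1' : (0:ℝ) < x := hx1
      have hne : x / (1 + x) ≠ t₀ := fun h => hx2 ⟨hx1', h⟩
      exact hQeval x hx1' hne
    · apply Set.Infinite.diff (Set.Ioi_infinite 0)
      apply Set.Finite.subset (Set.finite_singleton (t₀ / (1 - t₀)))
      rintro x ⟨hx0, hx⟩
      have h1x : (1 : ℝ) + x ≠ 0 := by positivity
      have hx' : x = t₀ * (1 + x) := by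
        field_simp at hx; linarith
      have ht1 : (1 : ℝ) - t₀ ≠ 0 := by
        intro h
        have : t₀ = 1 := by linarith
        rw [this] at hx'; linarith
      simp only [Set.mem_singleton_iff]
      field_simp
      linarith
  funext j
  have hcoeff : Q.coeff (j : ℕ) = c j * (m.choose j : ℝ) := by
    rw [hQ, Polynomial.finset_sum_coeff]
    simp only [Polynomial.coeff_C_mul, Polynomial.coeff_X_pow]
    rw [Finset.sum_eq_single j]
    · simp
    · intro b _ hb
      have hne : (j : ℕ) ≠ (b : ℕ) := fun h => hb (Fin.ext h.symm)
      rw [if_neg hne, mul_zero]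
    · simp
  rw [hQ0] at hcoeff
  simp only [Polynomial.coeff_zero] at hcoeff
  have hch : (m.choose (j : ℕ) : ℝ) ≠ 0 := by
    exact_mod_cast (Nat.choose_pos (Nat.lt_succ_iff.mp j.isLt)).ne'
  have hcj : c j = 0 := by
    rcases mul_eq_zero.mp hcoeff.symm with h | h
    · exact h
    · exact absurd h hch
  simpa [Matrix.mulVec, dotProduct, hc] using hcj
end

section
/- If the Bernstein-Bézout matrix B of p and q has rank n−1 and t_0 is a common root of p and q, then the nullspace of B is exactly the one-dimensional span of the vector (β_0^{(n-1)}(t_0), …, β_{n-1}^{(n-1)}(t_0)). -/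
open Polynomial in
theorem bern_indep : ∀ (m : ℕ) (d : ℕ → ℝ),
    (∑ k ∈ Finset.range (m+1), C (d k) * (1-X)^(m-k) * X^k) = 0 → ∀ k ≤ m, d k = 0 := by
  intro m
  induction m with
  | zero =>
    intro d h k hk
    interval_cases k
    simpa using congrArg (Polynomial.eval 0) h
  | succ m ih =>
    intro d h k hk
    have h0 : d 0 = 0 := by
      have := congrArg (Polynomial.eval 0) h
      simp [Polynomial.eval_finset_sum, zero_pow_eq] at this
      simpa using this
    rw [Finset.sum_range_succ'] at h
    have h' : (∑ k ∈ Finset.range (m+1), C (d (k+1)) * (1-X)^(m-k) * X^k) * X = 0 := by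
      rw [Finset.sum_mul]
      rw [h0] at h
      simpa [pow_succ, Nat.succ_sub_succ, mul_assoc, mul_comm, mul_left_comm] using h
    have h'' : (∑ k ∈ Finset.range (m+1), C (d (k+1)) * (1-X)^(m-k) * X^k) = 0 := by
      rcases mul_eq_zero.mp h' with h | h
      · exact h
      · exact absurd h Polynomial.X_ne_zero
    rcases Nat.eq_zero_or_eq_succ_pred k with hk0 | hk1
    · rw [hk0]; exact h0
    · rw [hk1]; exact ih _ h'' _ (by omega)

/-- If the Bernstein–Bézout matrix `B` has rank `n−1` and `t₀` is a common root of `p` and `q`,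
the nullspace of `B` is exactly the span of `(β_0^{(n-1)}(t₀), …, β_{n-1}^{(n-1)}(t₀))`. -/
theorem nullspace_eq_span (n : ℕ) (hn : 1 ≤ n) (p q : Polynomial ℝ)
    (hp : p.natDegree ≤ n) (hq : q.natDegree ≤ n)
    (B : Matrix (Fin n) (Fin n) ℝ)
    (hB : ∀ t s : ℝ, p.eval t * q.eval s - p.eval s * q.eval t
      = (t - s) * ∑ i : Fin n, ∑ j : Fin n, B i j * bern (n - 1) i t * bern (n - 1) j s)
    (hrank : B.rank = n - 1)
    (t₀ : ℝ) (hpt : p.eval t₀ = 0) (hqt : q.eval t₀ = 0) :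
    LinearMap.ker B.mulVecLin
      = Submodule.span ℝ {fun i : Fin n => bern (n - 1) (i : ℕ) t₀} := by
  obtain ⟨m, rfl⟩ : ∃ m, n = m + 1 := ⟨n - 1, by omega⟩
  simp only [Nat.add_sub_cancel] at *
  set v : Fin (m+1) → ℝ := fun i => bern m (i : ℕ) t₀ with hv
  set c : Fin (m+1) → ℝ := fun i => ∑ j, B i j * v j with hc
  -- Step 1: B * v = 0
  have hsum0 : ∀ t : ℝ, t ≠ t₀ → (∑ i : Fin (m+1), c i * bern m (i : ℕ) t) = 0 := by
    intro t ht
    have h1 := hB t t₀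
    rw [hpt, hqt] at h1
    simp only [mul_zero, zero_mul, sub_zero] at h1
    have hs : (∑ i : Fin (m+1), c i * bern m (i : ℕ) t)
        = ∑ i : Fin (m+1), ∑ j : Fin (m+1), B i j * bern m (i : ℕ) t * bern m (j : ℕ) t₀ := by
      apply Finset.sum_congr rfl
      intro i _
      rw [hc, Finset.sum_mul]
      apply Finset.sum_congr rfl
      intro j _
      simp only [hv]
      ring
    have h2 : (t - t₀) * (∑ i : Fin (m+1), c i * bern m (i : ℕ) t) = 0 := by
      rw [hs, ← h1]
    rcases mul_eq_zero.mp h2 with h | h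
    · exact absurd (by linarith [sub_eq_zero.mp h]) ht
    · exact h
  set d : ℕ → ℝ := fun k => if h : k < m + 1 then c ⟨k, h⟩ * (m.choose k : ℝ) else 0 with hd
  set P : Polynomial ℝ :=
    ∑ k ∈ Finset.range (m+1), Polynomial.C (d k) * (1 - Polynomial.X)^(m-k) * Polynomial.X^k
    with hP
  have hPeval : ∀ t : ℝ, P.eval t = ∑ i : Fin (m+1), c i * bern m (i : ℕ) t := by
    intro t
    calc P.eval t = ∑ k ∈ Finset.range (m+1), d k * ((1-t)^(m-k) * t^k) := by
          rw [hP, Polynomial.eval_finset_sum]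
          apply Finset.sum_congr rfl
          intro k _
          simp only [Polynomial.eval_mul, Polynomial.eval_C, Polynomial.eval_pow,
            Polynomial.eval_sub, Polynomial.eval_one, Polynomial.eval_X]
          ring
      _ = ∑ i : Fin (m+1), d (i : ℕ) * ((1-t)^(m-(i:ℕ)) * t^(i:ℕ)) :=
          (Fin.sum_univ_eq_sum_range (fun k => d k * ((1-t)^(m-k) * t^k)) (m+1)).symm
      _ = ∑ i : Fin (m+1), c i * bern m (i : ℕ) t := by
          apply Finset.sum_congr rfl
          intro i _
          rw [hd]
          simp only [i.isLt, dif_pos, Fin.eta, bern]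
          ring
  have hP0 : P = 0 := by
    apply Polynomial.eq_zero_of_infinite_isRoot
    apply Set.Infinite.mono (s := {t₀}ᶜ)
    · intro t ht
      simp only [Set.mem_setOf_eq, Polynomial.IsRoot.def]
      rw [hPeval]
      exact hsum0 t ht
    · exact Set.Finite.infinite_compl (Set.finite_singleton t₀)
  have hczero : ∀ i : Fin (m+1), c i = 0 := by
    intro i
    have h3 := bern_indep m d hP0 i (by omega)
    rw [hd] at h3
    simp only [i.isLt, dif_pos, Fin.eta] at h3
    rcases mul_eq_zero.mp h3 with h | h
    · exact h
    · exfalso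
      have : 0 < (m.choose i : ℝ) := by
        exact_mod_cast Nat.choose_pos (by omega : (i:ℕ) ≤ m)
      linarith
  have hker : v ∈ LinearMap.ker B.mulVecLin := by
    rw [LinearMap.mem_ker]
    funext i
    simpa [Matrix.mulVecLin_apply, Matrix.mulVec, dotProduct] using hczero i
  -- Step 2: v ≠ 0
  have hvsum : (∑ i : Fin (m+1), v i) = 1 := by
    have hb := add_pow t₀ (1 - t₀) m
    simp only [add_sub_cancel, one_pow] at hb
    calc (∑ i : Fin (m+1), v i) = ∑ k ∈ Finset.range (m+1), bern m k t₀ :=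
          Fin.sum_univ_eq_sum_range (fun k => bern m k t₀) (m+1)
      _ = ∑ k ∈ Finset.range (m+1), t₀ ^ k * (1-t₀) ^ (m-k) * (m.choose k : ℝ) := by
          apply Finset.sum_congr rfl
          intro k _
          simp only [bern]
          ring
      _ = 1 := by rw [← hb]
  have hvne : v ≠ 0 := by
    intro h0
    rw [h0] at hvsum
    simp at hvsum
  -- Step 3: dimension count
  have hfr : Module.finrank ℝ (LinearMap.ker B.mulVecLin) = 1 := by
    have h1 := LinearMap.finrank_range_add_finrank_ker B.mulVecLin
    have h2 : Module.finrank ℝ (LinearMap.range B.mulVecLin) = m := hrank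
    have h3 : Module.finrank ℝ (Fin (m+1) → ℝ) = m + 1 := by simp
    omega
  symm
  apply Submodule.eq_of_le_of_finrank_eq
  · rw [Submodule.span_le, Set.singleton_subset_iff]
    exact hker
  · rw [finrank_span_singleton hvne, hfr]
end

section
/- The entries of the Bernstein-Bézout matrix B of p = Σ p_i β_i^{(n)} and q = Σ q_i β_i^{(n)} satisfy the recurrence: B[i,1] = (n/i)(p_i q_0 − p_0 q_i) for 1 ≤ i ≤ n; B[n, j+1] = (n/(n−j))(p_n q_j − p_j q_n) for 1 ≤ j ≤ n−1; and B[i, j+1] = (n²/(i(n−j)))(p_i q_j − p_j q_i) + (j(n−i)/(i(n−j)))·B[i+1, j] for 1 ≤ i, j ≤ n−1. -/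
open Finset Polynomial in
lemma bern_indep_s12 (m : ℕ) (c : ℕ → ℝ)
    (h : ∀ t : ℝ, ∑ i ∈ range (m + 1), c i * bern m i t = 0) :
    ∀ i ≤ m, c i = 0 := by
  set Q : ℝ[X] := ∑ i ∈ range (m + 1), Polynomial.C (c i * m.choose i) * X ^ i with hQ
  have key : ∀ x : ℝ, 0 < x → Q.eval x = 0 := by
    intro x hx
    have hx1 : (0:ℝ) < 1 + x := by linarith
    have ht := h (x / (1 + x))
    have h1 : 1 - x / (1 + x) = 1 / (1 + x) := by field_simp; ring
    have e : Q.eval x = (1 + x) ^ m * ∑ i ∈ range (m + 1), c i * bern m i (x / (1 + x)) := by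
      rw [Finset.mul_sum, hQ]
      rw [Polynomial.eval_finset_sum]
      apply Finset.sum_congr rfl
      intro i hi
      have him : i ≤ m := Nat.lt_succ_iff.mp (Finset.mem_range.mp hi)
      simp only [Polynomial.eval_mul, Polynomial.eval_C, Polynomial.eval_pow, Polynomial.eval_X]
      rw [bern, h1, div_pow, div_pow, one_pow]
      have hsplit : (1 + x) ^ m = (1 + x) ^ (m - i) * (1 + x) ^ i := by
        rw [← pow_add, Nat.sub_add_cancel him]
      rw [hsplit]
      field_simp
    rw [e, ht, mul_zero]
  have hQ0 : Q = 0 := by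
    apply Polynomial.eq_zero_of_infinite_isRoot
    apply Set.Infinite.mono (s := Set.Ioi (0:ℝ))
    · intro x hx; exact key x hx
    · exact Set.Ioi_infinite 0
  intro i hi
  have := congrArg (fun p => Polynomial.coeff p i) hQ0
  simp only [hQ, Polynomial.finset_sum_coeff, Polynomial.coeff_C_mul, Polynomial.coeff_X_pow,
    Polynomial.coeff_zero, mul_ite, mul_one, mul_zero, Finset.sum_ite_eq (range (m+1)),
    Finset.mem_range, Nat.lt_succ_iff, hi, if_true] at this
  have hch : (m.choose i : ℝ) ≠ 0 := by
    exact_mod_cast Nat.cast_ne_zero.mpr (Nat.choose_pos hi).ne'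
  exact (mul_eq_zero.mp this).resolve_right hch

open Finset in
lemma bern_indep2 (m : ℕ) (c : ℕ → ℕ → ℝ)
    (h : ∀ t s : ℝ, ∑ a ∈ range (m + 1), ∑ b ∈ range (m + 1),
      c a b * bern m a t * bern m b s = 0) :
    ∀ a ≤ m, ∀ b ≤ m, c a b = 0 := by
  intro a ha b hb
  have h1 : ∀ s : ℝ, ∀ i ≤ m, (∑ b' ∈ range (m + 1), c i b' * bern m b' s) = 0 := by
    intro s
    apply bern_indep_s12 m (fun a' => ∑ b' ∈ range (m + 1), c a' b' * bern m b' s)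
    intro t
    rw [← h t s]
    apply Finset.sum_congr rfl
    intro a' _
    rw [Finset.sum_mul]
    apply Finset.sum_congr rfl
    intro b' _
    ring
  exact bern_indep_s12 m (fun b' => c a b') (fun s => h1 s a ha) b hb

lemma bern_raise_t (m i : ℕ) (t : ℝ) :
    t * bern m i t = (((i : ℝ) + 1) / ((m : ℝ) + 1)) * bern (m + 1) (i + 1) t := by
  have hm1 : ((m : ℝ) + 1) ≠ 0 := by positivity
  have hc : ((m : ℝ) + 1) * m.choose i = ((i : ℝ) + 1) * (m + 1).choose (i + 1) := by
    have := Nat.add_one_mul_choose_eq m i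
    have h2 : (((m + 1) * m.choose i : ℕ) : ℝ) = (((m + 1).choose (i + 1) * (i + 1) : ℕ) : ℝ) := by
      exact_mod_cast congrArg (fun k : ℕ => (k : ℝ)) this
    push_cast at h2
    linarith [h2]
  have hc' : (m.choose i : ℝ) = ((i : ℝ) + 1) / ((m : ℝ) + 1) * ((m + 1).choose (i + 1)) := by
    rw [div_mul_eq_mul_div, eq_div_iff hm1]; linarith [hc]
  rw [bern, bern]
  have hsub : m + 1 - (i + 1) = m - i := by omega
  rw [hsub]
  linear_combination ((1 - t) ^ (m - i) * t ^ (i + 1)) * hc'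

lemma bern_raise_1t (m i : ℕ) (t : ℝ) (him : i ≤ m) :
    (1 - t) * bern m i t = (((m : ℝ) + 1 - i) / ((m : ℝ) + 1)) * bern (m + 1) i t := by
  have hm1 : ((m : ℝ) + 1) ≠ 0 := by positivity
  have hc : (m.choose i : ℝ) * ((m : ℝ) + 1) = ((m + 1).choose i : ℝ) * ((m : ℝ) + 1 - i) := by
    have := Nat.choose_mul_succ_eq m i
    have h2 : ((m + 1 - i : ℕ) : ℝ) = (m : ℝ) + 1 - i := by
      have : i ≤ m + 1 := by omega
      push_cast [Nat.cast_sub this]; ring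
    calc (m.choose i : ℝ) * ((m : ℝ) + 1) = ((m.choose i * (m + 1) : ℕ) : ℝ) := by push_cast; ring
      _ = (((m + 1).choose i * (m + 1 - i) : ℕ) : ℝ) := by rw [this]
      _ = ((m + 1).choose i : ℝ) * ((m : ℝ) + 1 - i) := by push_cast [h2]; ring
  have hc' : (m.choose i : ℝ) = ((m : ℝ) + 1 - i) / ((m : ℝ) + 1) * ((m + 1).choose i) := by
    rw [div_mul_eq_mul_div, eq_div_iff hm1]; linarith [hc]
  rw [bern, bern]
  have hsub : m + 1 - i = (m - i) + 1 := by omega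
  rw [hsub, pow_succ]
  linear_combination ((1 - t) ^ (m - i) * (1 - t) * t ^ i) * hc'

open Finset in
/-- The Bini–Gemignani recurrence for the entries of the Bernstein–Bézout matrix of
`p = Σ pc_i β_i^{(n)}` and `q = Σ qc_i β_i^{(n)}`.  `M i j` denotes the `(i,j)` entry
with 1-based indices `1 ≤ i, j ≤ n`. -/
theorem bernsteinBezout_recurrence (n : ℕ) (hn : 1 ≤ n) (pc qc : ℕ → ℝ) (M : ℕ → ℕ → ℝ)
    (hM : ∀ t s : ℝ,
      (∑ i ∈ Finset.range (n + 1), pc i * bern n i t)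
          * (∑ i ∈ Finset.range (n + 1), qc i * bern n i s)
        - (∑ i ∈ Finset.range (n + 1), pc i * bern n i s)
          * (∑ i ∈ Finset.range (n + 1), qc i * bern n i t)
      = (t - s) * ∑ i ∈ Finset.range n, ∑ j ∈ Finset.range n,
          M (i + 1) (j + 1) * bern (n - 1) i t * bern (n - 1) j s) :
    (∀ i : ℕ, 1 ≤ i → i ≤ n →
      M i 1 = ((n : ℝ) / i) * (pc i * qc 0 - pc 0 * qc i))
    ∧ (∀ j : ℕ, 1 ≤ j → j ≤ n - 1 →
      M n (j + 1) = ((n : ℝ) / ((n : ℝ) - j)) * (pc n * qc j - pc j * qc n))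
    ∧ (∀ i j : ℕ, 1 ≤ i → i ≤ n - 1 → 1 ≤ j → j ≤ n - 1 →
      M i (j + 1) = ((n : ℝ) ^ 2 / ((i : ℝ) * ((n : ℝ) - j))) * (pc i * qc j - pc j * qc i)
        + (((j : ℝ) * ((n : ℝ) - i)) / ((i : ℝ) * ((n : ℝ) - j))) * M (i + 1) j) := by
  obtain ⟨m, rfl⟩ : ∃ m, n = m + 1 := ⟨n - 1, by omega⟩
  simp only [Nat.add_sub_cancel] at hM ⊢
  have hm : ((m : ℝ) + 1) ≠ 0 := by positivity
  set G : ℕ → ℕ → ℝ := fun a b =>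
    ((a : ℝ) * (((m : ℝ) + 1) - (b : ℝ)) / ((m : ℝ) + 1) ^ 2) * M a (b + 1)
      - ((((m : ℝ) + 1) - (a : ℝ)) * (b : ℝ) / ((m : ℝ) + 1) ^ 2) * M (a + 1) b with hG
  have key : ∀ a ≤ m + 1, ∀ b ≤ m + 1, pc a * qc b - pc b * qc a = G a b := by
    have h0 : ∀ t s : ℝ, ∑ a ∈ range (m + 1 + 1), ∑ b ∈ range (m + 1 + 1),
        (pc a * qc b - pc b * qc a - G a b) * bern (m + 1) a t * bern (m + 1) b s = 0 := by
      intro t s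
      set X : ℕ → ℕ → ℝ := fun a b => bern (m + 1) a t * bern (m + 1) b s with hX
      have hL : (∑ i ∈ Finset.range (m + 1 + 1), pc i * bern (m + 1) i t)
            * (∑ i ∈ Finset.range (m + 1 + 1), qc i * bern (m + 1) i s)
          - (∑ i ∈ Finset.range (m + 1 + 1), pc i * bern (m + 1) i s)
            * (∑ i ∈ Finset.range (m + 1 + 1), qc i * bern (m + 1) i t)
          = ∑ a ∈ range (m + 1 + 1), ∑ b ∈ range (m + 1 + 1),
              (pc a * qc b - pc b * qc a) * X a b := by
        rw [Finset.sum_mul_sum, Finset.sum_mul_sum,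
          Finset.sum_comm (s := range (m + 1 + 1)) (t := range (m + 1 + 1))
            (f := fun a b => pc a * bern (m + 1) a s * (qc b * bern (m + 1) b t)),
          ← Finset.sum_sub_distrib]
        apply Finset.sum_congr rfl
        intro a _
        rw [← Finset.sum_sub_distrib]
        apply Finset.sum_congr rfl
        intro b _
        simp only [hX]
        ring
      set f : ℕ → ℕ → ℝ := fun a b =>
        M a (b + 1) * ((a : ℝ) * (((m : ℝ) + 1) - (b : ℝ)) / ((m : ℝ) + 1) ^ 2) * X a b with hf
      set g : ℕ → ℕ → ℝ := fun a b =>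
        M (a + 1) b * ((((m : ℝ) + 1) - (a : ℝ)) * (b : ℝ) / ((m : ℝ) + 1) ^ 2) * X a b with hg
      have hR : (t - s) * ∑ i ∈ Finset.range (m + 1), ∑ j ∈ Finset.range (m + 1),
            M (i + 1) (j + 1) * bern m i t * bern m j s
          = ∑ a ∈ range (m + 1 + 1), ∑ b ∈ range (m + 1 + 1), G a b * X a b := by
        have step1 : (t - s) * ∑ i ∈ Finset.range (m + 1), ∑ j ∈ Finset.range (m + 1),
              M (i + 1) (j + 1) * bern m i t * bern m j s
            = ∑ i ∈ range (m + 1), ∑ j ∈ range (m + 1), (f (i + 1) j - g i (j + 1)) := by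
          rw [Finset.mul_sum]
          apply Finset.sum_congr rfl
          intro i hi
          rw [Finset.mul_sum]
          apply Finset.sum_congr rfl
          intro j hj
          have hi' : i ≤ m := Nat.lt_succ_iff.mp (Finset.mem_range.mp hi)
          have hj' : j ≤ m := Nat.lt_succ_iff.mp (Finset.mem_range.mp hj)
          have e1 := bern_raise_t m i t
          have e2 := bern_raise_t m j s
          have e3 := bern_raise_1t m i t hi'
          have e4 := bern_raise_1t m j s hj'
          have expand : (t - s) * (M (i + 1) (j + 1) * bern m i t * bern m j s)
              = M (i + 1) (j + 1) * ((t * bern m i t) * ((1 - s) * bern m j s)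
                - ((1 - t) * bern m i t) * (s * bern m j s)) := by ring
          rw [expand, e1, e2, e3, e4]
          simp only [hf, hg, hX]
          push_cast
          field_simp
        have step2 : ∑ i ∈ range (m + 1), ∑ j ∈ range (m + 1), f (i + 1) j
            = ∑ a ∈ range (m + 1 + 1), ∑ b ∈ range (m + 1 + 1), f a b := by
          rw [Finset.sum_range_succ' (fun a => ∑ b ∈ range (m + 1 + 1), f a b) (m + 1)]
          have hz : ∑ b ∈ range (m + 1 + 1), f 0 b = 0 := by
            apply Finset.sum_eq_zero
            intro b _
            simp [hf]
          rw [hz, add_zero]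
          apply Finset.sum_congr rfl
          intro i _
          rw [Finset.sum_range_succ (fun b => f (i + 1) b) (m + 1)]
          have : f (i + 1) (m + 1) = 0 := by
            simp only [hf]
            push_cast
            ring
          rw [this, add_zero]
        have step3 : ∑ i ∈ range (m + 1), ∑ j ∈ range (m + 1), g i (j + 1)
            = ∑ a ∈ range (m + 1 + 1), ∑ b ∈ range (m + 1 + 1), g a b := by
          rw [Finset.sum_range_succ (fun a => ∑ b ∈ range (m + 1 + 1), g a b) (m + 1)]
          have hz : ∑ b ∈ range (m + 1 + 1), g (m + 1) b = 0 := by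
            apply Finset.sum_eq_zero
            intro b _
            simp only [hg]
            push_cast
            ring
          rw [hz, add_zero]
          apply Finset.sum_congr rfl
          intro i _
          rw [Finset.sum_range_succ' (fun b => g i b) (m + 1)]
          have : g i 0 = 0 := by simp [hg]
          rw [this, add_zero]
        rw [step1]
        calc ∑ i ∈ range (m + 1), ∑ j ∈ range (m + 1), (f (i + 1) j - g i (j + 1))
            = (∑ i ∈ range (m + 1), ∑ j ∈ range (m + 1), f (i + 1) j)
              - ∑ i ∈ range (m + 1), ∑ j ∈ range (m + 1), g i (j + 1) := by
              rw [← Finset.sum_sub_distrib]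
              exact Finset.sum_congr rfl fun i _ => Finset.sum_sub_distrib _ _
          _ = (∑ a ∈ range (m + 1 + 1), ∑ b ∈ range (m + 1 + 1), f a b)
              - ∑ a ∈ range (m + 1 + 1), ∑ b ∈ range (m + 1 + 1), g a b := by
              rw [step2, step3]
          _ = ∑ a ∈ range (m + 1 + 1), ∑ b ∈ range (m + 1 + 1), G a b * X a b := by
              rw [← Finset.sum_sub_distrib]
              apply Finset.sum_congr rfl
              intro a _
              rw [← Finset.sum_sub_distrib]
              apply Finset.sum_congr rfl
              intro b _
              simp only [hf, hg, hG]
              ring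
      have hMts := hM t s
      rw [hL, hR] at hMts
      have : ∀ a ∈ range (m + 1 + 1), ∀ b ∈ range (m + 1 + 1),
          (pc a * qc b - pc b * qc a - G a b) * bern (m + 1) a t * bern (m + 1) b s
          = (pc a * qc b - pc b * qc a) * X a b - G a b * X a b := by
        intro a _ b _
        simp only [hX]
        ring
      calc ∑ a ∈ range (m + 1 + 1), ∑ b ∈ range (m + 1 + 1),
            (pc a * qc b - pc b * qc a - G a b) * bern (m + 1) a t * bern (m + 1) b s
          = ∑ a ∈ range (m + 1 + 1), ∑ b ∈ range (m + 1 + 1),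
            ((pc a * qc b - pc b * qc a) * X a b - G a b * X a b) := by
            apply Finset.sum_congr rfl
            intro a ha
            exact Finset.sum_congr rfl fun b hb => this a ha b hb
        _ = (∑ a ∈ range (m + 1 + 1), ∑ b ∈ range (m + 1 + 1),
              (pc a * qc b - pc b * qc a) * X a b)
            - ∑ a ∈ range (m + 1 + 1), ∑ b ∈ range (m + 1 + 1), G a b * X a b := by
            simp [Finset.sum_sub_distrib]
        _ = 0 := by rw [← hMts]; ring
    intro a ha b hb
    have h' := bern_indep2 (m + 1) (fun a b => pc a * qc b - pc b * qc a - G a b) h0 a ha b hb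
    linarith [h']
  refine ⟨?_, ?_, ?_⟩
  · intro i h1 h2
    have hi : (i : ℝ) ≠ 0 := by
      have : (0:ℝ) < i := by exact_mod_cast h1
      linarith
    have e := key i h2 0 (by omega)
    simp only [hG, Nat.cast_zero, mul_zero, zero_mul, sub_zero, mul_zero, zero_div] at e
    push_cast
    field_simp at e ⊢
    nlinarith [e, sq_nonneg ((m:ℝ)+1)]
  · intro j h1 h2
    have hj : ((m : ℝ) + 1) - (j : ℝ) ≠ 0 := by
      have : (j : ℝ) ≤ m := by exact_mod_cast h2
      linarith
    have e := key (m + 1) (le_refl _) j (by omega)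
    simp only [hG] at e
    push_cast at e ⊢
    field_simp at e ⊢
    nlinarith [e]
  · intro i j h1 h2 h3 h4
    have hi : (i : ℝ) ≠ 0 := by
      have : (0:ℝ) < i := by exact_mod_cast h1
      linarith
    have hj : ((m : ℝ) + 1) - (j : ℝ) ≠ 0 := by
      have : (j : ℝ) ≤ m := by exact_mod_cast h4
      linarith
    have e := key i (by omega) j (by omega)
    simp only [hG] at e
    push_cast at e ⊢
    field_simp at e ⊢
    nlinarith [e]
end
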